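/- For every n ≥ 3, there exists a set of n - 1 lines in the plane such that every cell of the n × n chessboard is pierced by at least one line of the set; hence p_n ≤ n - 1. -/

import Mathlib

open scoped Classical

/-- The closed cell `c i j` (indices in `{1,…,n}`) of the `n × n` chessboard on `[-1,1]²`. -/
def cell (n i j : ℕ) : Set (ℝ × ℝ) :=
  Set.Icc (-1 + ((i : ℝ) - 1) * (2 / n)) (-1 + (i : ℝ) * (2 / n)) ×ˢ
    Set.Icc (-1 + ((j : ℝ) - 1) * (2 / n)) (-1 + (j : ℝ) * (2 / n))

/-- A subset of the plane is a line. -/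
def IsLine (L : Set (ℝ × ℝ)) : Prop :=
  ∃ a b c : ℝ, (a, b) ≠ (0, 0) ∧ L = {p : ℝ × ℝ | a * p.1 + b * p.2 = c}

/-- A line pierces a cell if it meets its interior. -/
def Pierces (L s : Set (ℝ × ℝ)) : Prop := (L ∩ interior s).Nonempty

/-- The index set `{1,…,n} × {1,…,n}`. -/
def Idx (n : ℕ) : Finset (ℕ × ℕ) := Finset.Icc 1 n ×ˢ Finset.Icc 1 n

/-! ### Auxiliary definitions and lemmas -/

/-- The non-vertical line `y = m x + c`. -/
def mkLine (m c : ℝ) : Set (ℝ × ℝ) := {p : ℝ × ℝ | p.2 = m * p.1 + c}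

lemma isLine_mkLine (m c : ℝ) : IsLine (mkLine m c) := by
  refine ⟨m, -1, -c, ?_, ?_⟩
  · intro h
    have h2 : (-1 : ℝ) = 0 := congrArg Prod.snd h
    norm_num at h2
  · ext p
    simp only [mkLine, Set.mem_setOf_eq]
    constructor <;> intro h <;> linarith

lemma mkLine_inj {m c m' c' : ℝ} (h : mkLine m c = mkLine m' c') : m = m' ∧ c = c' := by
  have h0 : ((0 : ℝ), c) ∈ mkLine m c := by simp [mkLine]
  have h1 : ((1 : ℝ), m + c) ∈ mkLine m c := by simp [mkLine]
  rw [h] at h0 h1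
  simp only [mkLine, Set.mem_setOf_eq] at h0 h1
  constructor <;> nlinarith [h0, h1]

lemma interior_cell (n i j : ℕ) :
    interior (cell n i j) =
      Set.Ioo (-1 + ((i : ℝ) - 1) * (2 / n)) (-1 + (i : ℝ) * (2 / n)) ×ˢ
        Set.Ioo (-1 + ((j : ℝ) - 1) * (2 / n)) (-1 + (j : ℝ) * (2 / n)) := by
  rw [cell, interior_prod_eq, interior_Icc, interior_Icc]

/-- A line of positive slope pierces an open box as soon as it is below the top
at the left edge and above the bottom at the right edge. -/
lemma pierce_pos {m c xlo xhi ylo yhi : ℝ} (hm : 0 < m) (hx : xlo < xhi) (hy : ylo < yhi)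
    (h1 : m * xlo + c < yhi) (h2 : ylo < m * xhi + c) :
    ∃ x : ℝ, xlo < x ∧ x < xhi ∧ ylo < m * x + c ∧ m * x + c < yhi := by
  set A := max xlo ((ylo - c) / m) with hA
  set B := min xhi ((yhi - c) / m) with hB
  have hAB : A < B := by
    apply max_lt
    · apply lt_min hx
      rw [lt_div_iff₀ hm]; nlinarith
    · apply lt_min
      · rw [div_lt_iff₀ hm]; nlinarith
      · rw [div_lt_div_iff₀ hm hm]; nlinarith
  refine ⟨(A + B) / 2, ?_, ?_, ?_, ?_⟩
  · have := le_max_left xlo ((ylo - c) / m); linarith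
  · have := min_le_left xhi ((yhi - c) / m); linarith
  · have hA2 : (ylo - c) / m ≤ A := le_max_right _ _
    have hlt : (ylo - c) / m < (A + B) / 2 := by linarith
    rw [div_lt_iff₀ hm] at hlt; nlinarith
  · have hB2 : B ≤ (yhi - c) / m := min_le_right _ _
    have hlt : (A + B) / 2 < (yhi - c) / m := by linarith
    rw [lt_div_iff₀ hm] at hlt; nlinarith

/-- A line of negative slope pierces an open box as soon as it is above the bottom
at the left edge and below the top at the right edge. -/
lemma pierce_neg {m c xlo xhi ylo yhi : ℝ} (hm : m < 0) (hx : xlo < xhi) (hy : ylo < yhi)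
    (h1 : ylo < m * xlo + c) (h2 : m * xhi + c < yhi) :
    ∃ x : ℝ, xlo < x ∧ x < xhi ∧ ylo < m * x + c ∧ m * x + c < yhi := by
  set A := max xlo ((yhi - c) / m) with hA
  set B := min xhi ((ylo - c) / m) with hB
  have hAB : A < B := by
    apply max_lt
    · apply lt_min hx
      rw [lt_div_iff_of_neg hm]; nlinarith
    · apply lt_min
      · rw [div_lt_iff_of_neg hm]; nlinarith
      · have hpos : 0 < (yhi - ylo) / (-m) := div_pos (by linarith) (by linarith)
        have heq : (yhi - ylo) / (-m) = (ylo - c) / m - (yhi - c) / m := by ring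
        linarith
  refine ⟨(A + B) / 2, ?_, ?_, ?_, ?_⟩
  · have := le_max_left xlo ((yhi - c) / m); linarith
  · have := min_le_left xhi ((ylo - c) / m); linarith
  · have hB2 : B ≤ (ylo - c) / m := min_le_right _ _
    have hlt : (A + B) / 2 < (ylo - c) / m := by linarith
    rw [lt_div_iff_of_neg hm] at hlt; nlinarith
  · have hA2 : (yhi - c) / m ≤ A := le_max_right _ _
    have hlt : (yhi - c) / m < (A + B) / 2 := by linarith
    rw [div_lt_iff_of_neg hm] at hlt; nlinarith

/-- Piercing a cell with a positive-slope line. -/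
lemma pierce_cell_pos (n i j : ℕ) (hn : 0 < n) {m c : ℝ} (hm : 0 < m)
    (h1 : m * (-1 + ((i : ℝ) - 1) * (2 / n)) + c < -1 + (j : ℝ) * (2 / n))
    (h2 : -1 + ((j : ℝ) - 1) * (2 / n) < m * (-1 + (i : ℝ) * (2 / n)) + c) :
    Pierces (mkLine m c) (cell n i j) := by
  have hn0 : (0 : ℝ) < n := by exact_mod_cast hn
  have hstep : (0 : ℝ) < 2 / n := by positivity
  have hx : (-1 + ((i : ℝ) - 1) * (2 / n)) < -1 + (i : ℝ) * (2 / n) := by nlinarith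
  have hy : (-1 + ((j : ℝ) - 1) * (2 / n)) < -1 + (j : ℝ) * (2 / n) := by nlinarith
  obtain ⟨x, hx1, hx2, hy1, hy2⟩ := pierce_pos hm hx hy h1 h2
  refine ⟨(x, m * x + c), ?_, ?_⟩
  · simp [mkLine]
  · rw [interior_cell]
    exact ⟨⟨hx1, hx2⟩, hy1, hy2⟩

/-- Piercing a cell with a negative-slope line, with the cell-edge data abstracted. -/
lemma pierce_cell_neg' (n i j : ℕ) (hn : 0 < n) {m c xl xh yl yh : ℝ} (hm : m < 0)
    (exl : xl = -1 + ((i : ℝ) - 1) * (2 / n)) (exh : xh = -1 + (i : ℝ) * (2 / n))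
    (eyl : yl = -1 + ((j : ℝ) - 1) * (2 / n)) (eyh : yh = -1 + (j : ℝ) * (2 / n))
    (h1 : yl < m * xl + c) (h2 : m * xh + c < yh) :
    Pierces (mkLine m c) (cell n i j) := by
  have hn0 : (0 : ℝ) < n := by exact_mod_cast hn
  have hstep : (0 : ℝ) < 2 / n := by positivity
  have hx : xl < xh := by rw [exl, exh]; nlinarith
  have hy : yl < yh := by rw [eyl, eyh]; nlinarith
  obtain ⟨x, hx1, hx2, hy1, hy2⟩ := pierce_neg hm hx hy h1 h2
  refine ⟨(x, m * x + c), ?_, ?_⟩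
  · simp [mkLine]
  · rw [interior_cell]
    rw [exl] at hx1
    rw [exh] at hx2
    rw [eyl] at hy1
    rw [eyh] at hy2
    exact ⟨⟨hx1, hx2⟩, hy1, hy2⟩

set_option maxHeartbeats 4000000 in
/-- For `n ≥ 3`, some `n - 1` lines pierce every cell of `Q_n`; hence `p_n ≤ n - 1`. -/
theorem piercing_upper (n : ℕ) (hn : 3 ≤ n) :
    ∃ F : Finset (Set (ℝ × ℝ)), F.card = n - 1 ∧ (∀ L ∈ F, IsLine L) ∧
      ∀ ij ∈ Idx n, ∃ L ∈ F, Pierces L (cell n ij.1 ij.2) := by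
  have hnpos : 0 < n := by omega
  have hn0 : (0 : ℝ) < n := by exact_mod_cast hnpos
  have hn3 : (3 : ℝ) ≤ (n : ℝ) := by exact_mod_cast hn
  have hn2 : (0 : ℝ) < (n : ℝ) - 2 := by linarith
  have hne : (n : ℝ) ≠ 0 := ne_of_gt hn0
  have hne2 : (n : ℝ) - 2 ≠ 0 := ne_of_gt hn2
  -- the intercepts of the n-2 parallel lines of slope 2/5 (index k runs over 1,…,n-2)
  set cc : ℕ → ℝ := fun k => -(3 : ℝ) / 5 + (14 * (k : ℝ) - 4 * (n : ℝ) + 7) / (5 * n) with hcc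
  set g : ℕ → Set (ℝ × ℝ) := fun t => mkLine (2 / 5) (cc (t + 1)) with hg
  -- the extra line through the origin
  set mX : ℝ := (1 - (n : ℝ)) / ((n : ℝ) - 2) with hmX
  set LX : Set (ℝ × ℝ) := mkLine mX 0 with hLX
  have hmXneg : mX < 0 := by
    apply div_neg_of_neg_of_pos _ hn2
    linarith
  have hginj : Function.Injective g := by
    intro a b hab
    have h2 := (mkLine_inj hab).2
    simp only [hcc] at h2
    field_simp at h2
    have h3 : (a : ℝ) = b := by push_cast at h2; linarith
    exact_mod_cast h3
  set G : Finset (Set (ℝ × ℝ)) := (Finset.range (n - 2)).image g with hG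
  have hLXnotG : LX ∉ G := by
    intro hmem
    rw [hG, Finset.mem_image] at hmem
    obtain ⟨t, -, ht⟩ := hmem
    have h1 := (mkLine_inj ht).1
    rw [← h1] at hmXneg
    norm_num at hmXneg
  refine ⟨insert LX G, ?_, ?_, ?_⟩
  · rw [Finset.card_insert_of_notMem hLXnotG, hG,
      Finset.card_image_of_injective _ hginj, Finset.card_range]
    omega
  · intro L hL
    rw [Finset.mem_insert] at hL
    rcases hL with h | h
    · rw [h, hLX]; exact isLine_mkLine _ _
    · rw [hG, Finset.mem_image] at h
      obtain ⟨t, -, ht⟩ := h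
      rw [← ht, hg]; exact isLine_mkLine _ _
  · rintro ⟨i, j⟩ hij
    rw [Idx, Finset.mem_product, Finset.mem_Icc, Finset.mem_Icc] at hij
    obtain ⟨⟨hi1, hi2⟩, hj1, hj2⟩ := hij
    simp only
    by_cases hmid : 9 + 2 * i ≤ 5 * j + 2 * n ∧ 5 * j + 6 ≤ 5 * n + 2 * i
    · -- middle cells: pierced by one of the parallel lines
      set a : ℕ := 5 * j + 2 * n - (2 * i + 2) with ha
      set k : ℕ := a / 7 with hk
      have hdm := Nat.div_add_mod a 7
      have hml : a % 7 < 7 := Nat.mod_lt _ (by norm_num)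
      have hk1 : 1 ≤ k := by omega
      have hk2 : k ≤ n - 2 := by omega
      have hint1 : 14 * k + 4 * i + 4 ≤ 10 * j + 4 * n := by omega
      have hint2 : 10 * j + 4 * n ≤ 14 * k + 4 * i + 16 := by omega
      refine ⟨g (k - 1), ?_, ?_⟩
      · apply Finset.mem_insert_of_mem
        rw [hG, Finset.mem_image]
        exact ⟨k - 1, Finset.mem_range.mpr (by omega), rfl⟩
      · have hkk : k - 1 + 1 = k := by omega
        rw [hg]
        simp only [hkk]
        apply pierce_cell_pos n i j hnpos (by norm_num)
        · have hcast1 : (14 * (k : ℝ) + 4 * (i : ℝ) + 4) ≤ 10 * (j : ℝ) + 4 * (n : ℝ) := by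
            exact_mod_cast hint1
          have key : (-1 + (j : ℝ) * (2 / n)) - ((2 / 5) * (-1 + ((i : ℝ) - 1) * (2 / n)) + cc k)
              = (10 * (j : ℝ) + 4 * (n : ℝ) - (14 * (k : ℝ) + 4 * (i : ℝ) + 3)) / (5 * n) := by
            rw [hcc]
            field_simp
            ring
          have hpos : (0 : ℝ) <
              (10 * (j : ℝ) + 4 * (n : ℝ) - (14 * (k : ℝ) + 4 * (i : ℝ) + 3)) / (5 * n) := by
            apply div_pos (by linarith) (by positivity)
          linarith
        · have hcast2 : 10 * (j : ℝ) + 4 * (n : ℝ) ≤ 14 * (k : ℝ) + 4 * (i : ℝ) + 16 := by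
            exact_mod_cast hint2
          have key : ((2 / 5) * (-1 + (i : ℝ) * (2 / n)) + cc k) - (-1 + ((j : ℝ) - 1) * (2 / n))
              = (14 * (k : ℝ) + 4 * (i : ℝ) + 17 - (10 * (j : ℝ) + 4 * (n : ℝ))) / (5 * n) := by
            rw [hcc]
            field_simp
            ring
          have hpos : (0 : ℝ) <
              (14 * (k : ℝ) + 4 * (i : ℝ) + 17 - (10 * (j : ℝ) + 4 * (n : ℝ))) / (5 * n) := by
            apply div_pos (by linarith) (by positivity)
          linarith
    · -- the four corner cells: pierced by the extra line
      refine ⟨LX, Finset.mem_insert_self _ _, ?_⟩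
      have hq : (0 : ℝ) < (n : ℝ) * ((n : ℝ) - 2) := by positivity
      have h3n4 : (0 : ℝ) < 3 * (n : ℝ) - 4 := by linarith
      have hqpos : (0 : ℝ) < (3 * (n : ℝ) - 4) / ((n : ℝ) * ((n : ℝ) - 2)) := div_pos h3n4 hq
      have hnpos' : (0 : ℝ) < 1 / (n : ℝ) := by positivity
      have hcases : (i = 1 ∧ j = n) ∨ (i = 2 ∧ j = n) ∨ (i = n - 1 ∧ j = 1) ∨
          (i = n ∧ j = 1) := by omega
      have hcast1 : ((n - 1 : ℕ) : ℝ) = (n : ℝ) - 1 := by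
        push_cast [Nat.cast_sub (show 1 ≤ n by omega)]
        ring
      rw [hLX]
      rcases hcases with ⟨hi, hj⟩ | ⟨hi, hj⟩ | ⟨hi, hj⟩ | ⟨hi, hj⟩ <;> rw [hi, hj]
      · -- cell (1, n)
        refine pierce_cell_neg' n 1 n hnpos (xl := -1) (xh := -1 + 2 / n)
          (yl := 1 - 2 / (n : ℝ)) (yh := 1) hmXneg (by push_cast; field_simp <;> ring_nf <;> norm_num <;> tauto)
          (by push_cast; field_simp <;> ring_nf <;> norm_num <;> tauto) (by field_simp <;> ring_nf <;> norm_num <;> tauto) (by field_simp <;> ring_nf <;> norm_num <;> tauto) ?_ ?_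
        · have key : mX * (-1) + 0 - (1 - 2 / (n : ℝ))
              = (3 * (n : ℝ) - 4) / ((n : ℝ) * ((n : ℝ) - 2)) := by
            rw [hmX]; field_simp <;> ring_nf <;> norm_num <;> tauto
          linarith
        · have key : (1 : ℝ) - (mX * (-1 + 2 / n) + 0) = 1 / (n : ℝ) := by
            rw [hmX]; field_simp <;> ring_nf <;> norm_num <;> tauto
          linarith
      · -- cell (2, n)
        refine pierce_cell_neg' n 2 n hnpos (xl := -1 + 2 / (n : ℝ)) (xh := -1 + 4 / n)
          (yl := 1 - 2 / (n : ℝ)) (yh := 1) hmXneg (by push_cast; field_simp <;> ring_nf <;> norm_num <;> tauto)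
          (by push_cast; field_simp <;> ring_nf <;> norm_num <;> tauto) (by field_simp <;> ring_nf <;> norm_num <;> tauto) (by field_simp <;> ring_nf <;> norm_num <;> tauto) ?_ ?_
        · have key : mX * (-1 + 2 / (n : ℝ)) + 0 - (1 - 2 / (n : ℝ)) = 1 / (n : ℝ) := by
            rw [hmX]; field_simp <;> ring_nf <;> norm_num <;> tauto
          linarith
        · have key : (1 : ℝ) - (mX * (-1 + 4 / n) + 0)
              = (3 * (n : ℝ) - 4) / ((n : ℝ) * ((n : ℝ) - 2)) := by
            rw [hmX]; field_simp <;> ring_nf <;> norm_num <;> tauto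
          linarith
      · -- cell (n - 1, 1)
        refine pierce_cell_neg' n (n - 1) 1 hnpos (xl := 1 - 4 / (n : ℝ)) (xh := 1 - 2 / n)
          (yl := -1) (yh := -1 + 2 / (n : ℝ)) hmXneg
          (by rw [hcast1]; field_simp <;> ring_nf <;> norm_num <;> tauto) (by rw [hcast1]; field_simp <;> ring_nf <;> norm_num <;> tauto)
          (by push_cast; field_simp <;> ring_nf <;> norm_num <;> tauto) (by push_cast; field_simp <;> ring_nf <;> norm_num <;> tauto) ?_ ?_
        · have key : mX * (1 - 4 / (n : ℝ)) + 0 - (-1)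
              = (3 * (n : ℝ) - 4) / ((n : ℝ) * ((n : ℝ) - 2)) := by
            rw [hmX]; field_simp <;> ring_nf <;> norm_num <;> tauto
          linarith
        · have key : (-1 + 2 / (n : ℝ)) - (mX * (1 - 2 / n) + 0) = 1 / (n : ℝ) := by
            rw [hmX]; field_simp <;> ring_nf <;> norm_num <;> tauto
          linarith
      · -- cell (n, 1)
        refine pierce_cell_neg' n n 1 hnpos (xl := 1 - 2 / (n : ℝ)) (xh := 1)
          (yl := -1) (yh := -1 + 2 / (n : ℝ)) hmXneg
          (by field_simp <;> ring_nf <;> norm_num <;> tauto) (by field_simp <;> ring_nf <;> norm_num <;> tauto) (by push_cast; field_simp <;> ring_nf <;> norm_num <;> tauto) (by push_cast; field_simp <;> ring_nf <;> norm_num <;> tauto) ?_ ?_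
        · have key : mX * (1 - 2 / (n : ℝ)) + 0 - (-1) = 1 / (n : ℝ) := by
            rw [hmX]; field_simp <;> ring_nf <;> norm_num <;> tauto
          linarith
        · have key : (-1 + 2 / (n : ℝ)) - (mX * 1 + 0)
              = (3 * (n : ℝ) - 4) / ((n : ℝ) * ((n : ℝ) - 2)) := by
            rw [hmX]; field_simp <;> ring_nf <;> norm_num <;> tauto
          linarith
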